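/- Let p be a prime and f a monic polynomial of degree 22 over Q whose roots are the eigenvalues of an operator. If f factors as (1/p)(x-p)^2 g(x) where g is irreducible of degree 20 with non-integral coefficients, then exactly 2 roots λ of f (with multiplicity) have the property that λ/p is a root of unity. -/
import Mathlib


open Polynomial

/-- Let `p` be a prime and `f` a monic polynomial of degree 22 over ℚ. If `f`
factors as `(1/p) · (x - p)² · g(x)` with `g` irreducible of degree 20 having some
non-integral coefficient, then exactly 2 roots `λ` of `f` in ℂ (counted with multiplicity)
have the property that `λ/p` is a root of unity. -/
theorem stmt10 (p : ℕ) (hp : p.Prime)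
    (f g : Polynomial ℚ) (hfmonic : f.Monic) (hfdeg : f.natDegree = 22)
    (hfac : f = Polynomial.C ((p : ℚ)⁻¹) * (Polynomial.X - Polynomial.C (p : ℚ)) ^ 2 * g)
    (hgirr : Irreducible g) (hgdeg : g.natDegree = 20)
    (hgnonint : ∃ n : ℕ, (g.coeff n).den ≠ 1) :
    Multiset.card
      (@Multiset.filter ℂ (fun l : ℂ => ∃ k : ℕ, 0 < k ∧ (l / (p : ℂ)) ^ k = 1)
        (Classical.decPred _) ((f.map (algebraMap ℚ ℂ)).roots)) = 2 := by
  classical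
  have hpQ : (p : ℚ) ≠ 0 := Nat.cast_ne_zero.2 hp.ne_zero
  have hpC : (p : ℂ) ≠ 0 := Nat.cast_ne_zero.2 hp.ne_zero
  have hg0 : g ≠ 0 := hgirr.ne_zero
  have hf0 : f ≠ 0 := hfmonic.ne_zero
  -- leading coefficient of g is p
  have hglead : g.leadingCoeff = (p : ℚ) := by
    have h1 : f.leadingCoeff = (p : ℚ)⁻¹ * g.leadingCoeff := by
      rw [hfac]
      rw [leadingCoeff_mul, leadingCoeff_mul, leadingCoeff_C,
        ((monic_X_sub_C ((p : ℚ))).pow 2).leadingCoeff, mul_one]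
    rw [hfmonic.leadingCoeff] at h1
    field_simp at h1
    linarith
  -- no root of g gives a root of unity after dividing by p
  have hgroots : ∀ z : ℂ, z ∈ (g.map (algebraMap ℚ ℂ)).roots →
      ¬ (∃ k : ℕ, 0 < k ∧ (z / (p : ℂ)) ^ k = 1) := by
    intro z hz ⟨k, hk, hku⟩
    have hzroot : aeval z g = 0 := by
      have := (mem_roots (by
        simpa [Polynomial.Monic.ne_zero] using
          (Polynomial.map_ne_zero_iff (algebraMap ℚ ℂ).injective).2 hg0)).1 hz
      simpa [aeval_def, eval_map] using this
    -- z is integral over ℤ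
    have hzetaint : IsIntegral ℤ (z / (p : ℂ)) := by
      refine ⟨X ^ k - 1, ?_, ?_⟩
      · simpa using monic_X_pow_sub_C (1 : ℤ) hk.ne'
      · simp [hku]
    have hzint : IsIntegral ℤ z := by
      have hp' : IsIntegral ℤ ((p : ℤ) : ℂ) := isIntegral_algebraMap
      have := hp'.mul hzetaint
      have hzz : ((p : ℤ) : ℂ) * (z / (p : ℂ)) = z := by
        push_cast
        field_simp
      rwa [hzz] at this
    -- minpoly ℚ z relates to g
    have hmin : minpoly ℚ z = g * C (g.leadingCoeff)⁻¹ :=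
      (minpoly.eq_of_irreducible hgirr hzroot).symm
    have hint : minpoly ℚ z = (minpoly ℤ z).map (algebraMap ℤ ℚ) :=
      minpoly.isIntegrallyClosed_eq_field_fractions ℚ ℂ hzint
    obtain ⟨n, hn⟩ := hgnonint
    apply hn
    have hgeq : g = C (p : ℚ) * minpoly ℚ z := by
      rw [hmin, hglead, mul_comm (C ((p : ℚ))), mul_assoc, ← C_mul,
        inv_mul_cancel₀ hpQ, C_1, mul_one]
    have : g.coeff n = (p : ℚ) * ((minpoly ℤ z).coeff n : ℚ) := by
      rw [hgeq, coeff_C_mul, hint, coeff_map, eq_intCast]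
    rw [this]
    push_cast
    rw [show ((p : ℚ) * ((minpoly ℤ z).coeff n : ℚ)) = (((p : ℤ) * (minpoly ℤ z).coeff n : ℤ) : ℚ) by push_cast; ring]
    exact Rat.den_intCast _
  -- compute roots of f
  have hmap : f.map (algebraMap ℚ ℂ) =
      C ((p : ℂ))⁻¹ * ((X - C ((p : ℂ))) ^ 2 * g.map (algebraMap ℚ ℂ)) := by
    rw [hfac]
    simp [Polynomial.map_mul, Polynomial.map_pow, Polynomial.map_sub, map_inv₀, mul_assoc]
  have hne : C ((p : ℂ))⁻¹ * ((X - C ((p : ℂ))) ^ 2 * g.map (algebraMap ℚ ℂ)) ≠ 0 := by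
    rw [← hmap]
    exact (Polynomial.map_ne_zero_iff (algebraMap ℚ ℂ).injective).2 hf0
  have hroots : (f.map (algebraMap ℚ ℂ)).roots =
      2 • {(p : ℂ)} + (g.map (algebraMap ℚ ℂ)).roots := by
    rw [hmap, roots_C_mul _ (inv_ne_zero hpC), roots_mul (by
      intro h; exact hne (by rw [h, mul_zero])), roots_pow, roots_X_sub_C]
  rw [hroots, Multiset.filter_add]
  have h1 : Multiset.filter (fun l : ℂ => ∃ k : ℕ, 0 < k ∧ (l / (p : ℂ)) ^ k = 1)
      (2 • {(p : ℂ)}) = 2 • {(p : ℂ)} := by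
    rw [Multiset.filter_eq_self]
    intro a ha
    have : a = (p : ℂ) := by
      simpa using ha
    exact ⟨1, one_pos, by simp [this, div_self hpC]⟩
  have h2 : Multiset.filter (fun l : ℂ => ∃ k : ℕ, 0 < k ∧ (l / (p : ℂ)) ^ k = 1)
      (g.map (algebraMap ℚ ℂ)).roots = 0 := by
    rw [Multiset.filter_eq_nil]
    exact hgroots
  rw [h1, h2]
  simp
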